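/- The entries of Euler's difference table satisfy e_n^k = ∑_{j=0}^{n-k} (-1)^j C(n-k, j) (n-j)! for 0 ≤ k ≤ n. -/
import Mathlib


/-- Euler's difference table: diagonal `eulerE j j = j!` and
`eulerE k j = eulerE k (j+1) - eulerE (k-1) j`. -/
def eulerE : ℕ → ℕ → ℤ
  | k, j =>
    if _h : k ≤ j then (Nat.factorial k : ℤ)
    else eulerE k (j + 1) - eulerE (k - 1) j
  termination_by k j => k - j
  decreasing_by all_goals omega

lemma eulerE_key (d n : ℕ) (h : d + 1 ≤ n) :
    ∑ j ∈ Finset.range (d + 1 + 1),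
        (-1) ^ j * (Nat.choose (d + 1) j : ℤ) * (Nat.factorial (n - j) : ℤ) =
      (∑ j ∈ Finset.range (d + 1),
        (-1) ^ j * (Nat.choose d j : ℤ) * (Nat.factorial (n - j) : ℤ)) -
      ∑ j ∈ Finset.range (d + 1),
        (-1) ^ j * (Nat.choose d j : ℤ) * (Nat.factorial (n - 1 - j) : ℤ) := by
  rw [Finset.sum_range_succ'
    (fun j => (-1) ^ j * (Nat.choose (d + 1) j : ℤ) * (Nat.factorial (n - j) : ℤ)),
    Finset.sum_range_succ'
    (fun j => (-1) ^ j * (Nat.choose d j : ℤ) * (Nat.factorial (n - j) : ℤ))]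
  have e1 : ∑ j ∈ Finset.range (d + 1),
      (-1) ^ (j + 1) * (Nat.choose (d + 1) (j + 1) : ℤ) * (Nat.factorial (n - (j + 1)) : ℤ) =
      (∑ j ∈ Finset.range (d + 1),
        (-1) ^ (j + 1) * (Nat.choose d j : ℤ) * (Nat.factorial (n - (j + 1)) : ℤ)) +
      ∑ j ∈ Finset.range (d + 1),
        (-1) ^ (j + 1) * (Nat.choose d (j + 1) : ℤ) * (Nat.factorial (n - (j + 1)) : ℤ) := by
    rw [← Finset.sum_add_distrib]
    refine Finset.sum_congr rfl fun j _ => ?_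
    rw [Nat.choose_succ_succ]
    push_cast
    ring
  have e2 : ∑ j ∈ Finset.range (d + 1),
      (-1) ^ (j + 1) * (Nat.choose d j : ℤ) * (Nat.factorial (n - (j + 1)) : ℤ) =
      - ∑ j ∈ Finset.range (d + 1),
        (-1) ^ j * (Nat.choose d j : ℤ) * (Nat.factorial (n - 1 - j) : ℤ) := by
    rw [← Finset.sum_neg_distrib]
    refine Finset.sum_congr rfl fun j hj => ?_
    have : n - (j + 1) = n - 1 - j := by omega
    rw [this]; ring
  have e3 : ∑ j ∈ Finset.range (d + 1),
      (-1) ^ (j + 1) * (Nat.choose d (j + 1) : ℤ) * (Nat.factorial (n - (j + 1)) : ℤ) =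
      ∑ j ∈ Finset.range d,
        (-1) ^ (j + 1) * (Nat.choose d (j + 1) : ℤ) * (Nat.factorial (n - (j + 1)) : ℤ) := by
    rw [Finset.sum_range_succ, Nat.choose_succ_self]
    simp
  rw [e1, e2, e3]
  simp only [Nat.choose_zero_right]
  ring

theorem eulerE_alternating_sum (n k : ℕ) (hkn : k ≤ n) :
    eulerE n k =
      ∑ j ∈ Finset.range (n - k + 1),
        (-1) ^ j * (Nat.choose (n - k) j : ℤ) * (Nat.factorial (n - j) : ℤ) := by
  suffices H : ∀ d n k : ℕ, k ≤ n → n - k = d →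
      eulerE n k =
        ∑ j ∈ Finset.range (n - k + 1),
          (-1) ^ j * (Nat.choose (n - k) j : ℤ) * (Nat.factorial (n - j) : ℤ) from
    H (n - k) n k hkn rfl
  intro d
  induction d with
  | zero =>
    intro n k hkn hd
    have hnk : n = k := by omega
    subst hnk
    rw [eulerE]
    simp
  | succ d ih =>
    intro n k hkn hd
    have hk : ¬ n ≤ k := by omega
    rw [eulerE, dif_neg hk,
      ih n (k + 1) (by omega) (by omega),
      ih (n - 1) k (by omega) (by omega)]
    have h1 : n - (k + 1) = d := by omega
    have h2 : n - 1 - k = d := by omega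
    rw [h1, h2, hd]
    exact (eulerE_key d n (by omega)).symm
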